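/- Let n ≥ 2 and let X ⊆ ℝⁿ be a singleton (a polytope with exactly 1 vertex). Then there exists a finite set D ⊆ ℝⁿ of directions with |D| ≤ 2n - 1 such that D determines X within the class of all polytopes in ℝⁿ having at most 3 extreme points. (Convergence of Algorithm 3 in the case n_v = 1 with known bound n̄ = 3: it terminates after at most 2n - 1 oracle calls with X_v = S_v.) -/

import Mathlib

open RealInnerProductSpace

/-- Support function of a subset of `ℝⁿ`. -/
noncomputable def supp {n : ℕ} (X : Set (EuclideanSpace ℝ (Fin n)))
    (d : EuclideanSpace ℝ (Fin n)) : ℝ :=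
  sSup ((fun v => ⟪v, d⟫) '' X)

/-- `X` is a polytope: the convex hull of a nonempty finite set. -/
def IsPolytope {n : ℕ} (X : Set (EuclideanSpace ℝ (Fin n))) : Prop :=
  ∃ F : Finset (EuclideanSpace ℝ (Fin n)), F.Nonempty ∧ X = convexHull ℝ (F : Set _)

/-- The finite direction set `D` determines `X` within the class `𝒞`. -/
def Determines {n : ℕ} (𝒞 : Set (Set (EuclideanSpace ℝ (Fin n))))
    (D : Finset (EuclideanSpace ℝ (Fin n))) (X : Set (EuclideanSpace ℝ (Fin n))) : Prop :=
  ∀ Y ∈ 𝒞, (∀ d ∈ D, supp Y d = supp X d) → Y = X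

/-- a singleton `X ⊆ ℝⁿ` (`n ≥ 2`) is determined by at most `2n - 1`
directions within the class of polytopes in `ℝⁿ` with at most `3` extreme points. -/
theorem stmt_11 (n : ℕ) (hn : 2 ≤ n) (X : Set (EuclideanSpace ℝ (Fin n)))
    (x : EuclideanSpace ℝ (Fin n)) (hX : X = {x}) :
    ∃ D : Finset (EuclideanSpace ℝ (Fin n)), D.card ≤ 2 * n - 1 ∧
      Determines {Y | IsPolytope Y ∧ (Set.extremePoints ℝ Y).ncard ≤ 3} D X := by
  classical
  subst hX
  set s : EuclideanSpace ℝ (Fin n) := -(∑ i : Fin n, EuclideanSpace.single i (1:ℝ)) with hs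
  set B : Finset (EuclideanSpace ℝ (Fin n)) :=
    Finset.univ.image (fun i : Fin n => EuclideanSpace.single i (1:ℝ)) with hB
  refine ⟨insert s B, ?_, ?_⟩
  · have h1 : (insert s B).card ≤ B.card + 1 := Finset.card_insert_le _ _
    have h2 : B.card ≤ n := by
      simpa using Finset.card_image_le (s := (Finset.univ : Finset (Fin n)))
        (f := fun i : Fin n => EuclideanSpace.single i (1:ℝ))
    omega
  · intro Y hY hsupp
    obtain ⟨⟨F, hFne, hFY⟩, -⟩ := hY
    have hYc : IsCompact Y := by
      rw [hFY]; exact F.finite_toSet.isCompact_convexHull ℝ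
    have hYne : Y.Nonempty := by
      rw [hFY]
      exact ⟨hFne.choose, subset_convexHull ℝ _ hFne.choose_spec⟩
    -- for each direction d in D, every point of Y satisfies ⟪y,d⟫ ≤ ⟪x,d⟫
    have key : ∀ d ∈ insert s B, ∀ y ∈ Y, ⟪y, d⟫ ≤ ⟪x, d⟫ := by
      intro d hd y hy
      have hbdd : BddAbove ((fun v => ⟪v, d⟫) '' Y) :=
        (hYc.image (Continuous.inner continuous_id continuous_const)).bddAbove
      have hle : ⟪y, d⟫ ≤ supp Y d := le_csSup hbdd ⟨y, hy, rfl⟩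
      have hx : supp ({x} : Set (EuclideanSpace ℝ (Fin n))) d = ⟪x, d⟫ := by
        simp [supp]
      rw [hsupp d hd, hx] at hle
      exact hle
    rw [Set.eq_singleton_iff_nonempty_unique_mem]
    refine ⟨hYne, fun y hy => ?_⟩
    -- coordinatewise inequalities
    have hcoord : ∀ i : Fin n, y i ≤ x i := by
      intro i
      have := key (EuclideanSpace.single i (1:ℝ))
        (Finset.mem_insert_of_mem (Finset.mem_image_of_mem _ (Finset.mem_univ i))) y hy
      simpa [EuclideanSpace.inner_single_right] using this
    have hsum : ∑ i : Fin n, x i ≤ ∑ i : Fin n, y i := by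
      have := key s (Finset.mem_insert_self _ _) y hy
      simp only [hs, inner_neg_right, neg_le_neg_iff, inner_sum] at this
      simpa [EuclideanSpace.inner_single_right] using this
    have hzero : ∀ i ∈ (Finset.univ : Finset (Fin n)), x i - y i = 0 := by
      rw [← Finset.sum_eq_zero_iff_of_nonneg (fun i _ => sub_nonneg.mpr (hcoord i))]
      have h1 : ∑ i : Fin n, (x i - y i) ≤ 0 := by
        rw [Finset.sum_sub_distrib]; linarith
      have h2 : 0 ≤ ∑ i : Fin n, (x i - y i) :=
        Finset.sum_nonneg (fun i _ => sub_nonneg.mpr (hcoord i))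
      linarith
    ext i
    have := hzero i (Finset.mem_univ i)
    linarith
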